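/- Let X, Y ⊂ ℝ be two disjoint sets of type F_σ such that every x ∈ X is a bilateral accumulation point of ℝ \ Y and every y ∈ Y is a bilateral accumulation point of ℝ \ X. Then for every a ∈ X and c ∈ Y the open segment between a and c meets the complement of X ∪ Y; that is, ]a,c[ \ (X ∪ Y) ≠ ∅. -/

import Mathlib

open MeasureTheory Metric Filter Set ENNReal
open scoped Topology NNReal ENNReal symmDiff

noncomputable section
attribute [local instance] Classical.propDecidable

abbrev Euc (n : ℕ) := EuclideanSpace ℝ (Fin n)

variable {n : ℕ}

/-- Upper outer density of `A` at `x`. -/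
def upperDens (A : Set (Euc n)) (x : Euc n) : ℝ≥0∞ :=
  limsup (fun r : ℝ => volume (A ∩ closedBall x r) / volume (closedBall x r)) (𝓝[>] 0)

def essInterior (A : Set (Euc n)) : Set (Euc n) := {x | upperDens Aᶜ x = 0}

def essBoundary (A : Set (Euc n)) : Set (Euc n) :=
  {x | 0 < upperDens A x ∧ 0 < upperDens Aᶜ x}

def prepInterior (A : Set (Euc n)) : Set (Euc n) := {x | upperDens Aᶜ x < 1/2}

def prepBoundary (A : Set (Euc n)) : Set (Euc n) :=
  {x | 1/2 ≤ upperDens A x ∧ 1/2 ≤ upperDens Aᶜ x}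

def IsTestFun (Ω : Set (Euc n)) (φ : Euc n → ℝ) : Prop :=
  ContDiff ℝ (⊤ : ℕ∞) φ ∧ HasCompactSupport φ ∧ tsupport φ ⊆ Ω

def IsTestField (Ω : Set (Euc n)) (ψ : Euc n → Euc n) : Prop :=
  ContDiff ℝ (⊤ : ℕ∞) ψ ∧ HasCompactSupport ψ ∧ tsupport ψ ⊆ Ω

/-- divergence of a vector field -/
def divg (ψ : Euc n → Euc n) (x : Euc n) : ℝ :=
  ∑ i, fderiv ℝ ψ x (EuclideanSpace.single i 1) i

/-- Variation of `A` in `Ω` at direction `τ`. -/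
def dirVar (Ω A : Set (Euc n)) (τ : Euc n) : ℝ≥0∞ :=
  if NullMeasurableSet (A ∩ Ω) volume then
    ⨆ (φ : Euc n → ℝ) (_ : IsTestFun Ω φ ∧ ∀ x, |φ x| ≤ 1),
      ENNReal.ofReal (∫ x in Ω, A.indicator (fun _ => (1:ℝ)) x * fderiv ℝ φ x τ)
  else ⊤

/-- Perimeter of `A` in `Ω`. -/
def perim (Ω A : Set (Euc n)) : ℝ≥0∞ :=
  if NullMeasurableSet (A ∩ Ω) volume then
    ⨆ (ψ : Euc n → Euc n) (_ : IsTestField Ω ψ ∧ ∀ x, ‖ψ x‖ ≤ 1),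
      ENNReal.ofReal (∫ x in Ω, A.indicator (fun _ => (1:ℝ)) x * divg ψ x)
  else ⊤

/-- Carathéodory's construction (method II) from a set function `m`
defined on a covering family `F`. -/
def carathII {X : Type*} [EMetricSpace X] (m : Set X → ℝ≥0∞) (F : Set (Set X)) (E : Set X) :
    ℝ≥0∞ :=
  ⨆ (δ : ℝ≥0∞) (_ : 0 < δ),
    ⨅ (t : ℕ → Set X) (_ : E ⊆ ⋃ i, t i) (_ : ∀ i, t i ∈ F ∧ EMetric.diam (t i) ≤ δ),
      ∑' i, m (t i)

/-- orthogonal projection onto the hyperplane orthogonal to `τ` -/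
def projFn (τ : Euc n) (x : Euc n) : Euc n := (Submodule.orthogonalProjectionOnto (ℝ ∙ τ)ᗮ x : Euc n)

/-- The projection measure `μ_τ`. -/
def muProj (τ : Euc n) (E : Set (Euc n)) : ℝ≥0∞ :=
  carathII (fun B => μH[(n : ℝ) - 1] (projFn τ '' B)) {B | MeasurableSet B} E

/-- volume of the unit ball in `ℝ^k` -/
def unitBallVol (k : ℕ) : ℝ := Real.pi ^ ((k : ℝ) / 2) / Real.Gamma ((k : ℝ) / 2 + 1)

/-- The integralgeometric measure `I^{n-1}_1`. -/
def intGeom (n : ℕ) (E : Set (Euc n)) : ℝ≥0∞ :=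
  carathII (fun B => (ENNReal.ofReal (2 * unitBallVol (n - 1)))⁻¹ *
      ∫⁻ τ in sphere (0 : Euc n) 1, μH[(n : ℝ) - 1] (projFn τ '' B) ∂μH[(n : ℝ) - 1])
    {B | MeasurableSet B} E

/-- The line through `z` in direction `τ`. -/
def lineThrough (z τ : Euc n) : Set (Euc n) := {y | ∃ t : ℝ, y = z + t • τ}

/-- The set `M^A_{Ω,τ}(z)` of hits of `L_τ(z) ∩ Ω` on `A`. -/
def hits (Ω A : Set (Euc n)) (τ z : Euc n) : Set (Euc n) :=
  {x ∈ lineThrough z τ ∩ Ω | ∀ r > (0:ℝ),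
    0 < μH[(1:ℝ)] ((lineThrough z τ ∩ Ω) ∩ A ∩ ball x r) ∧
    0 < μH[(1:ℝ)] (((lineThrough z τ ∩ Ω) \ A) ∩ ball x r)}

/-- `m^A_{Ω,τ}(z)`, the number of hits. -/
def mHits (Ω A : Set (Euc n)) (τ z : Euc n) : ℝ≥0∞ := (hits Ω A τ z).encard

/-- Integral of a function against a (finite) signed Borel measure. -/
def sintegral (s : SignedMeasure (Euc n)) (φ : Euc n → ℝ) : ℝ :=
  ∫ x, φ x ∂s.toJordanDecomposition.posPart - ∫ x, φ x ∂s.toJordanDecomposition.negPart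

/-- A signed measure is concentrated on `Ω` (i.e. it is a measure "on `Ω`"). -/
def VanishesOff (Ω : Set (Euc n)) (s : SignedMeasure (Euc n)) : Prop :=
  ∀ E, MeasurableSet E → E ⊆ Ωᶜ → s E = 0

/-- `s` is the measure `Φ^g_{Ω,τ}`. -/
def IsDirVarMeasure (Ω : Set (Euc n)) (τ : Euc n) (g : Euc n → ℝ) (s : SignedMeasure (Euc n)) :
    Prop :=
  VanishesOff Ω s ∧
  ∀ φ : Euc n → ℝ, IsTestFun Ω φ →
    ∫ x in Ω, g x * fderiv ℝ φ x τ = - sintegral s φ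

/-- `g ∈ BV(Ω,τ)`. -/
def MemBVDir (Ω : Set (Euc n)) (τ : Euc n) (g : Euc n → ℝ) : Prop :=
  LocallyIntegrableOn g Ω volume ∧ ∃ s, IsDirVarMeasure Ω τ g s

/-- `g ∈ BV(Ω)`. -/
def MemBV (Ω : Set (Euc n)) (g : Euc n → ℝ) : Prop :=
  LocallyIntegrableOn g Ω volume ∧
  ∃ s : Fin n → SignedMeasure (Euc n), (∀ i, VanishesOff Ω (s i)) ∧
    ∀ ψ : Euc n → Euc n, IsTestField Ω ψ →
      ∫ x in Ω, g x * divg ψ x = - ∑ i, sintegral (s i) (fun x => ψ x i)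

/-- Total variation `‖Φ‖` of an `ℝⁿ`-valued Borel measure given by components `Φ i`. -/
def vecTotalVariation (Φ : Fin n → SignedMeasure (Euc n)) : ℝ≥0∞ :=
  ⨆ (P : ℕ → Set (Euc n)) (_ : ∀ i, MeasurableSet (P i))
    (_ : Pairwise (Function.onFun Disjoint P)),
    ∑' i, ENNReal.ofReal (Real.sqrt (∑ j, (Φ j (P i))^2))

/-- `t` is a bilateral accumulation point of `S ⊆ ℝ`. -/
def IsBilateralAccPt (S : Set ℝ) (t : ℝ) : Prop :=
  t ∈ closure (S ∩ Set.Ioi t) ∧ t ∈ closure (S ∩ Set.Iio t)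

/-- Between a point of `S` and a point of `T` (inside `[a,c] ⊆ S ∪ T`) there is a point
in the closure of both `S ∩ [a,c]` and `T ∩ [a,c]`. -/
lemma between_aux (S T : Set ℝ) (a c p q : ℝ) (hcover : Set.Icc a c ⊆ S ∪ T)
    (hp : p ∈ S) (hq : q ∈ T) (hpq : p < q) (hap : a ≤ p) (hqc : q ≤ c) :
    ∃ s ∈ Set.Icc p q, s ∈ closure (S ∩ Set.Icc a c) ∧ s ∈ closure (T ∩ Set.Icc a c) := by
  set s := sSup (S ∩ Set.Icc p q) with hs
  have hne : (S ∩ Set.Icc p q).Nonempty := ⟨p, hp, le_refl p, hpq.le⟩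
  have hbdd : BddAbove (S ∩ Set.Icc p q) := ⟨q, fun x hx => hx.2.2⟩
  have hsmem : s ∈ Set.Icc p q :=
    ⟨le_csSup hbdd ⟨hp, le_refl p, hpq.le⟩, csSup_le hne fun x hx => hx.2.2⟩
  have hsub : Set.Icc p q ⊆ Set.Icc a c := Set.Icc_subset_Icc hap hqc
  have h1 : s ∈ closure (S ∩ Set.Icc a c) :=
    closure_mono (Set.inter_subset_inter_right S hsub) (csSup_mem_closure hne hbdd)
  refine ⟨s, hsmem, h1, ?_⟩
  rcases eq_or_lt_of_le hsmem.2 with heq | hlt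
  · rw [heq]
    exact subset_closure ⟨hq, hap.trans hpq.le, hqc⟩
  · have hIoc : Set.Ioc s q ⊆ T ∩ Set.Icc a c := by
      intro r hr
      have hrIcc : r ∈ Set.Icc a c := ⟨hap.trans (hsmem.1.trans hr.1.le), hr.2.trans hqc⟩
      rcases hcover hrIcc with hrS | hrT
      · exact absurd (le_csSup hbdd ⟨hrS, hsmem.1.trans hr.1.le, hr.2⟩) (not_le.mpr hr.1)
      · exact ⟨hrT, hrIcc⟩
    have hscl : s ∈ closure (Set.Ioc s q) := by
      rw [closure_Ioc hlt.ne]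
      exact ⟨le_refl s, hlt.le⟩
    exact closure_mono hIoc hscl

/-- **Key lemma.** If near a common boundary point `t` all common boundary points belong
to `S`, we get a contradiction with the bilateral accumulation hypothesis. -/
lemma key_lemma (S T : Set ℝ) (a c : ℝ) (hdisj : Disjoint S T)
    (hcover : Set.Icc a c ⊆ S ∪ T)
    (haccS : ∀ s ∈ S, IsBilateralAccPt Tᶜ s)
    (t : ℝ) (ht : t ∈ Set.Icc a c)
    (htS : t ∈ closure (S ∩ Set.Icc a c)) (htT : t ∈ closure (T ∩ Set.Icc a c))
    (ε : ℝ) (hε : 0 < ε)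
    (hball : ∀ z, z ∈ closure (S ∩ Set.Icc a c) → z ∈ closure (T ∩ Set.Icc a c) →
      |z - t| < ε → z ∈ S) : False := by
  set B := closure (S ∩ Set.Icc a c) ∩ closure (T ∩ Set.Icc a c) with hBdef
  have hBclosed : IsClosed B := isClosed_closure.inter isClosed_closure
  have htB : t ∈ B := ⟨htS, htT⟩
  obtain ⟨y, hyT, hyd⟩ : ∃ y ∈ T ∩ Set.Icc a c, dist t y < ε :=
    Metric.mem_closure_iff.mp htT ε hε
  have hyd' : |y - t| < ε := by rw [abs_sub_comm]; rwa [Real.dist_eq] at hyd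
  have hynB : y ∉ B := fun h =>
    Set.disjoint_left.mp hdisj (hball y h.1 h.2 hyd') hyT.1
  have hyt : y ≠ t := fun h =>
    Set.disjoint_left.mp hdisj (hball t htS htT (by simpa using hε)) (h ▸ hyT.1)
  rcases lt_or_gt_of_ne hyt with hlt | hgt
  · -- y < t : work on the left of t
    set u := sInf (B ∩ Set.Icc y t) with hu
    have hne : (B ∩ Set.Icc y t).Nonempty := ⟨t, htB, hlt.le, le_refl t⟩
    have hbdd : BddBelow (B ∩ Set.Icc y t) := ⟨y, fun x hx => hx.2.1⟩
    have humem : u ∈ B ∩ Set.Icc y t := (hBclosed.inter isClosed_Icc).csInf_mem hne hbdd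
    have hyu : y < u := lt_of_le_of_ne humem.2.1 (fun h => hynB (by rw [h]; exact humem.1))
    have huS : u ∈ S := by
      apply hball u humem.1.1 humem.1.2
      rw [abs_sub_comm, abs_of_nonneg (sub_nonneg.mpr humem.2.2)]
      have h1 : t - y ≤ |t - y| := le_abs_self _
      have h2 : |t - y| = |y - t| := abs_sub_comm t y
      linarith [humem.2.1]
    have hIco : Set.Ico y u ⊆ T := by
      intro p hp
      have hpIcc : p ∈ Set.Icc a c :=
        ⟨hyT.2.1.trans hp.1, (hp.2.le.trans humem.2.2).trans ht.2⟩
      rcases hcover hpIcc with hpS | hpT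
      · have hyp : y < p := lt_of_le_of_ne hp.1
          (fun h => Set.disjoint_left.mp hdisj hpS (h ▸ hyT.1))
        obtain ⟨s, hsIcc, hs1, hs2⟩ := between_aux T S a c y p
          (fun x hx => (hcover hx).symm) hyT.1 hpS hyp hyT.2.1 hpIcc.2
        have hsle : u ≤ s := csInf_le hbdd ⟨⟨hs2, hs1⟩, hsIcc.1, hsIcc.2.trans (hp.2.le.trans humem.2.2)⟩
        have : s ≤ p := hsIcc.2
        linarith [hp.2]
      · exact hpT
    obtain ⟨-, hacc2⟩ := haccS u huS
    rw [_root_.mem_closure_iff] at hacc2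
    obtain ⟨z, hzo, hzs⟩ := hacc2 (Set.Ioi y) isOpen_Ioi hyu
    exact hzs.1 (hIco ⟨hzo.le, hzs.2⟩)
  · -- t < y : work on the right of t
    set u := sSup (B ∩ Set.Icc t y) with hu
    have hne : (B ∩ Set.Icc t y).Nonempty := ⟨t, htB, le_refl t, hgt.le⟩
    have hbdd : BddAbove (B ∩ Set.Icc t y) := ⟨y, fun x hx => hx.2.2⟩
    have humem : u ∈ B ∩ Set.Icc t y := (hBclosed.inter isClosed_Icc).csSup_mem hne hbdd
    have huy : u < y := lt_of_le_of_ne humem.2.2 (fun h => hynB (by rw [← h]; exact humem.1))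
    have huS : u ∈ S := by
      apply hball u humem.1.1 humem.1.2
      rw [abs_of_nonneg (sub_nonneg.mpr humem.2.1)]
      have h1 : y - t ≤ |y - t| := le_abs_self _
      linarith [humem.2.2]
    have hIoc : Set.Ioc u y ⊆ T := by
      intro p hp
      have hpIcc : p ∈ Set.Icc a c :=
        ⟨ht.1.trans (humem.2.1.trans hp.1.le), hp.2.trans hyT.2.2⟩
      rcases hcover hpIcc with hpS | hpT
      · have hpy : p < y := lt_of_le_of_ne hp.2
          (fun h => Set.disjoint_left.mp hdisj hpS (h ▸ hyT.1))
        obtain ⟨s, hsIcc, hs1, hs2⟩ := between_aux S T a c p y hcover hpS hyT.1 hpy hpIcc.1 hyT.2.2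
        have hsle : s ≤ u := le_csSup hbdd
          ⟨⟨hs1, hs2⟩, humem.2.1.trans (hp.1.le.trans hsIcc.1), hsIcc.2⟩
        linarith [hp.1, hsIcc.1]
      · exact hpT
    obtain ⟨hacc1, -⟩ := haccS u huS
    rw [_root_.mem_closure_iff] at hacc1
    obtain ⟨z, hzo, hzs⟩ := hacc1 (Set.Iio y) isOpen_Iio huy
    exact hzs.1 (hIoc ⟨hzs.2, hzo.le⟩)

/-- The main statement for `a < c`. -/
lemma aux_thm (X Y : Set ℝ) (hdisj : Disjoint X Y)
    (hX : ∃ f : ℕ → Set ℝ, (∀ k, IsClosed (f k)) ∧ X = ⋃ k, f k)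
    (hY : ∃ f : ℕ → Set ℝ, (∀ k, IsClosed (f k)) ∧ Y = ⋃ k, f k)
    (haccX : ∀ x ∈ X, IsBilateralAccPt Yᶜ x)
    (haccY : ∀ y ∈ Y, IsBilateralAccPt Xᶜ y)
    {a c : ℝ} (ha : a ∈ X) (hc : c ∈ Y) (hac : a < c) :
    (Set.Ioo a c \ (X ∪ Y)).Nonempty := by
  by_contra hcon
  rw [Set.not_nonempty_iff_eq_empty, Set.diff_eq_empty] at hcon
  have hcover : Set.Icc a c ⊆ X ∪ Y := by
    intro p hp
    rcases eq_or_lt_of_le hp.1 with h | h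
    · exact Or.inl (h ▸ ha)
    rcases eq_or_lt_of_le hp.2 with h2 | h2
    · rw [h2]; exact Or.inr hc
    · exact hcon ⟨h, h2⟩
  obtain ⟨f, hfc, hfX⟩ := hX
  obtain ⟨g, hgc, hgY⟩ := hY
  set B := closure (X ∩ Set.Icc a c) ∩ closure (Y ∩ Set.Icc a c) with hBdef
  have hBclosed : IsClosed B := isClosed_closure.inter isClosed_closure
  have hBne : B.Nonempty := by
    obtain ⟨s, _, hs1, hs2⟩ := between_aux X Y a c a c hcover ha hc hac le_rfl le_rfl
    exact ⟨s, hs1, hs2⟩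
  have hBsub : B ⊆ Set.Icc a c := fun z hz =>
    closure_minimal Set.inter_subset_right isClosed_Icc hz.1
  haveI : Nonempty ↥B := hBne.to_subtype
  haveI : CompleteSpace ↥B := hBclosed.completeSpace_coe
  set F : ℕ ⊕ ℕ → Set ↥B :=
    Sum.elim (fun k => Subtype.val ⁻¹' f k) (fun k => Subtype.val ⁻¹' g k) with hFdef
  have hFc : ∀ i, IsClosed (F i) := by
    rintro (k | k)
    · exact (hfc k).preimage continuous_subtype_val
    · exact (hgc k).preimage continuous_subtype_val
  have hFU : ⋃ i, F i = Set.univ := by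
    ext z
    simp only [Set.mem_univ, iff_true, Set.mem_iUnion]
    rcases hcover (hBsub z.2) with hzX | hzY
    · rw [hfX] at hzX
      obtain ⟨k, hk⟩ := Set.mem_iUnion.mp hzX
      exact ⟨Sum.inl k, hk⟩
    · rw [hgY] at hzY
      obtain ⟨k, hk⟩ := Set.mem_iUnion.mp hzY
      exact ⟨Sum.inr k, hk⟩
  obtain ⟨i, z, hz⟩ := nonempty_interior_of_iUnion_of_closed hFc hFU
  rw [mem_interior_iff_mem_nhds, mem_nhds_subtype] at hz
  obtain ⟨U, hU1, hU2⟩ := hz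
  obtain ⟨ε, hε, hballU⟩ := Metric.mem_nhds_iff.mp hU1
  have hmem : ∀ w (hw : w ∈ B), |w - (z : ℝ)| < ε → (⟨w, hw⟩ : ↥B) ∈ F i := by
    intro w hw hlt
    exact hU2 (hballU (by rwa [Metric.mem_ball, Real.dist_eq]))
  rcases i with k | k
  · refine key_lemma X Y a c hdisj hcover haccX z (hBsub z.2) z.2.1 z.2.2 ε hε ?_
    intro w h1 h2 hlt
    have := hmem w ⟨h1, h2⟩ hlt
    rw [hfX]
    exact Set.mem_iUnion.mpr ⟨k, this⟩
  · refine key_lemma Y X a c hdisj.symm (fun x hx => (hcover hx).symm) haccY z (hBsub z.2)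
      z.2.2 z.2.1 ε hε ?_
    intro w h1 h2 hlt
    have := hmem w ⟨h2, h1⟩ hlt
    rw [hgY]
    exact Set.mem_iUnion.mpr ⟨k, this⟩

/-- If `X, Y ⊆ ℝ` are disjoint `F_σ` sets such that every point of `X`
is a bilateral accumulation point of `ℝ \ Y` and every point of `Y` is a bilateral
accumulation point of `ℝ \ X`, then for `a ∈ X`, `c ∈ Y` the open interval between
`a` and `c` meets the complement of `X ∪ Y`. -/
theorem open_segment_meets_compl_of_Fsigma
    (X Y : Set ℝ) (hdisj : Disjoint X Y)
    (hX : ∃ f : ℕ → Set ℝ, (∀ k, IsClosed (f k)) ∧ X = ⋃ k, f k)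
    (hY : ∃ f : ℕ → Set ℝ, (∀ k, IsClosed (f k)) ∧ Y = ⋃ k, f k)
    (haccX : ∀ x ∈ X, IsBilateralAccPt Yᶜ x)
    (haccY : ∀ y ∈ Y, IsBilateralAccPt Xᶜ y) :
    ∀ a ∈ X, ∀ c ∈ Y, (Set.Ioo (min a c) (max a c) \ (X ∪ Y)).Nonempty := by
  intro a ha c hc
  rcases lt_trichotomy a c with h | h | h
  · rw [min_eq_left h.le, max_eq_right h.le]
    exact aux_thm X Y hdisj hX hY haccX haccY ha hc h
  · exact absurd hc (Set.disjoint_left.mp hdisj (h ▸ ha))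
  · rw [min_eq_right h.le, max_eq_left h.le, Set.union_comm]
    exact aux_thm Y X hdisj.symm hY hX haccY haccX hc ha h

end
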